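/- Let n ≥ 1 be an integer, let x and y be valid Fibonacci representations, and let a, b ∈ {0,1}. If [y] − n[x] ≥ 2n, then [yb] − n[xa] ≥ n. -/

import Mathlib

/-- The Fibonacci (Zeckendorf) value of a binary word written msd-first:
`[x₁⋯x_ℓ] = Σ_j x_j · F_{ℓ−j+2}`. -/
def fibVal : List Bool → ℕ
  | [] => 0
  | a :: rest => (if a then Nat.fib (rest.length + 2) else 0) + fibVal rest

/-- A binary word is a valid Fibonacci representation if it has no factor `11`. -/
def ValidFib (w : List Bool) : Prop :=
  w.Chain' (fun a b => a = false ∨ b = false)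

/-- The numerical value of a single bit. -/
def bitVal (a : Bool) : ℤ := if a then 1 else 0

/-- Value with each digit's Fibonacci weight shifted down by one index. -/
def sVal : List Bool → ℕ
  | [] => 0
  | a :: rest => (if a then Nat.fib (rest.length + 1) else 0) + sVal rest

open goldenRatio

lemma q_pos : (0:ℝ) < -ψ := by linarith [Real.goldenConj_neg]
lemma q_lt_one : (-ψ:ℝ) < 1 := by linarith [Real.neg_one_lt_goldenConj]
lemma q_sq : ((-ψ:ℝ)) ^ 2 + (-ψ) = 1 := by have := Real.goldenConj_sq; nlinarith

lemma gold_mul_fib (m : ℕ) : φ * Nat.fib m - Nat.fib (m + 1) = -ψ ^ m := by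
  have := Real.fib_succ_sub_goldenRatio_mul_fib m
  linarith

lemma absD_le : ∀ (w : List Bool), ValidFib w →
    |φ * sVal w - fibVal w| ≤ 1 - (-ψ) ^ (w.length + 1)
  | [], _ => by
      simp [sVal, fibVal]
      nlinarith [q_sq, q_pos, q_lt_one]
  | false :: r, h => by
      have hr : ValidFib r := List.IsChain.tail h
      have ih := absD_le r hr
      have hD : φ * (sVal (false :: r) : ℝ) - fibVal (false :: r)
          = φ * sVal r - fibVal r := by simp [sVal, fibVal]
      rw [hD, List.length_cons]
      have hp : (0:ℝ) < (-ψ) ^ (r.length + 1) := pow_pos q_pos _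
      have hstep : ((-ψ:ℝ)) ^ (r.length + 2) = (-ψ) ^ (r.length + 1) * (-ψ) := by ring
      nlinarith [q_pos, q_lt_one]
  | [true], _ => by
      have : φ * (sVal [true] : ℝ) - fibVal [true] = -ψ := by
        simp [sVal, fibVal, Nat.fib]
        linarith [Real.goldenRatio_add_goldenConj]
      rw [this, abs_of_pos q_pos]
      norm_num
  | true :: c :: r, h => by
      have hc : c = false := by
        rcases (List.isChain_cons_cons.mp h).1 with h' | h'
        · exact absurd h' (by simp)
        · exact h'
      subst hc
      have hr : ValidFib r := List.IsChain.tail (List.IsChain.tail h)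
      have ih := absD_le r hr
      have hfib := gold_mul_fib (r.length + 2)
      have hD : φ * (sVal (true :: false :: r) : ℝ) - fibVal (true :: false :: r)
          = -ψ ^ (r.length + 2) + (φ * sVal r - fibVal r) := by
        simp [sVal, fibVal]
        push_cast
        linarith
      rw [hD]
      have habs : |(-(ψ ^ (r.length + 2)) : ℝ)| = (-ψ) ^ (r.length + 2) := by
        rw [abs_neg, abs_pow, abs_of_neg Real.goldenConj_neg]
      have h1 : |(-(ψ ^ (r.length + 2)) : ℝ) + (φ * sVal r - fibVal r)|
          ≤ (-ψ) ^ (r.length + 2) + (1 - (-ψ) ^ (r.length + 1)) := by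
        calc _ ≤ |(-(ψ ^ (r.length + 2)) : ℝ)| + |φ * sVal r - fibVal r| := abs_add_le _ _
          _ ≤ _ := by rw [habs]; linarith
      have hp : (0:ℝ) < (-ψ) ^ (r.length + 1) := pow_pos q_pos _
      have e2 : ((-ψ:ℝ)) ^ (r.length + 2) = (-ψ) ^ (r.length + 1) * (-ψ) := by ring
      have e3 : ((-ψ:ℝ)) ^ (r.length + 2 + 1) = (-ψ) ^ (r.length + 1) * (-ψ) ^ 2 := by ring
      simp only [List.length_cons]
      nlinarith [q_sq]

lemma fibVal_append (w : List Bool) (b : Bool) :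
    fibVal (w ++ [b]) = fibVal w + sVal w + (if b then 1 else 0) := by
  induction w with
  | nil => cases b <;> simp [fibVal, sVal]
  | cons a r ih =>
    cases a <;> simp [fibVal, sVal, ih, List.length_append, Nat.fib_add_two] <;> ring

lemma sVal_ge (n : ℕ) (hn : 1 ≤ n) (x y : List Bool)
    (hx : ValidFib x) (hy : ValidFib y)
    (h : (fibVal y : ℤ) - n * fibVal x ≥ 2 * n) :
    (n : ℤ) * sVal x ≤ sVal y := by
  have hxD := absD_le x hx
  have hyD := absD_le y hy
  have hqx : (0:ℝ) < (-ψ) ^ (x.length + 1) := pow_pos q_pos _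
  have hqy : (0:ℝ) < (-ψ) ^ (y.length + 1) := pow_pos q_pos _
  rw [abs_le] at hxD hyD
  have hR : (fibVal y : ℝ) - n * fibVal x ≥ 2 * n := by exact_mod_cast h
  have hgold : (0:ℝ) < φ := Real.goldenRatio_pos
  have key : (n : ℝ) * sVal x < sVal y := by
    have h1 : φ * (sVal y : ℝ) ≥ (fibVal y : ℝ) - 1 + (-ψ) ^ (y.length + 1) := by linarith
    have h2 : (n:ℝ) * (φ * sVal x) ≤ n * ((fibVal x : ℝ) + 1 - (-ψ) ^ (x.length + 1)) := by
      have hle : φ * (sVal x : ℝ) ≤ (fibVal x : ℝ) + 1 - (-ψ) ^ (x.length + 1) := by linarith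
      have hn' : (0:ℝ) ≤ n := by positivity
      nlinarith
    have hn1 : (1:ℝ) ≤ n := by exact_mod_cast hn
    have : φ * ((n:ℝ) * sVal x) < φ * sVal y := by nlinarith
    exact lt_of_mul_lt_mul_left this hgold.le
  have : ((n * sVal x : ℤ) : ℝ) < ((sVal y : ℤ) : ℝ) := by push_cast; exact key
  exact_mod_cast this.le

theorem diff_stays_high_of_ge_two_n (n : ℕ) (hn : 1 ≤ n) (x y : List Bool)
    (hx : ValidFib x) (hy : ValidFib y) (a b : Bool)
    (h : (fibVal y : ℤ) - n * fibVal x ≥ 2 * n) :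
    (fibVal (y ++ [b]) : ℤ) - n * fibVal (x ++ [a]) ≥ n := by
  have hs := sVal_ge n hn x y hx hy h
  have hy' := fibVal_append y b
  have hx' := fibVal_append x a
  have hn' : (1:ℤ) ≤ n := by exact_mod_cast hn
  rw [hy', hx']
  cases a <;> cases b <;> simp at hy' hx' ⊢ <;> push_cast <;> nlinarith
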